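/- Assume u ∉ {0, −1}. Let A be the unital associative ℂ-algebra presented by generators ℓ_1,…,ℓ_{n−1}, t_1,…,t_n subject to the relations: t_i^d = 1; t_i t_j = t_j t_i; ℓ_i t_j = t_j ℓ_i for j ∉ {i, i+1}; ℓ_i ℓ_j = ℓ_j ℓ_i for |i−j| > 1; ℓ_i t_i = t_{i+1} ℓ_i + (1/(u+1))(t_i − t_{i+1}); ℓ_i t_{i+1} = t_i ℓ_i + (1/(u+1))(t_{i+1} − t_i); ℓ_i² = (((u−1)e_i + 2)/(u+1)) ℓ_i; ℓ_i ℓ_{i+1} ℓ_i − (((u−1)e_i + 1)/(u+1)²) ℓ_i = ℓ_{i+1} ℓ_i ℓ_{i+1} − (((u−1)e_{i+1} + 1)/(u+1)²) ℓ_{i+1}; and e_i e_{i+1} ℓ_i ℓ_{i+1} ℓ_i = (u/(u+1)²) e_i e_{i+1} ℓ_i, where e_i := (1/d) Σ_{s=0}^{d−1} t_i^s t_{i+1}^{d−s} in A. Then the assignment g_i ↦ (u+1)ℓ_i − 1, t_j ↦ t_j induces a well-defined ℂ-algebra isomorphism from FTL_{d,n}(u) onto A. -/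

import Mathlib

noncomputable section

open scoped BigOperators

/-- Index type for the generators of the Yokonuma–Hecke algebra `Y_{d,n}(u)`:
`Sum.inl i` encodes the braiding generator `g_{i+1}` and `Sum.inr j` the framing
generator `t_{j+1}` (`0`-based encoding of the `1`-based generators). -/
abbrev YHIdx (n : ℕ) := Sum (Fin (n - 1)) (Fin n)

/-- The free `ℂ`-algebra on the generators `g_1, …, g_{n-1}, t_1, …, t_n`. -/
abbrev YHFree (n : ℕ) := FreeAlgebra ℂ (YHIdx n)

/-- The generator `g_i` (1-based) of the free algebra; junk value `0` out of range. -/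
def gF (n i : ℕ) : YHFree n :=
  if h : 1 ≤ i ∧ i ≤ n - 1 then FreeAlgebra.ι ℂ (Sum.inl ⟨i - 1, by omega⟩) else 0

/-- The generator `t_j` (1-based) of the free algebra; junk value `0` out of range. -/
def tF (n j : ℕ) : YHFree n :=
  if h : 1 ≤ j ∧ j ≤ n then FreeAlgebra.ι ℂ (Sum.inr ⟨j - 1, by omega⟩) else 0

/-- The element `e_i := (1/d) ∑_{s=0}^{d-1} t_i^s t_{i+1}^{d-s}` of the free algebra. -/
def eF (d n i : ℕ) : YHFree n :=
  (d : ℂ)⁻¹ • ∑ s ∈ Finset.range d, tF n i ^ s * tF n (i + 1) ^ (d - s)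

/-- The defining relations of the Yokonuma–Hecke algebra `Y_{d,n}(u)`. -/
inductive YHRel (d n : ℕ) (u : ℂ) : YHFree n → YHFree n → Prop
  | g_comm {i j : ℕ} (hi : 1 ≤ i) (hij : i + 1 < j) (hj : j ≤ n - 1) :
      YHRel d n u (gF n i * gF n j) (gF n j * gF n i)
  | braid {i : ℕ} (hi : 1 ≤ i) (hi' : i + 1 ≤ n - 1) :
      YHRel d n u (gF n i * gF n (i + 1) * gF n i)
        (gF n (i + 1) * gF n i * gF n (i + 1))
  | t_comm {i j : ℕ} (hi : 1 ≤ i) (hi' : i ≤ n) (hj : 1 ≤ j) (hj' : j ≤ n) :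
      YHRel d n u (tF n i * tF n j) (tF n j * tF n i)
  | t_pow {i : ℕ} (hi : 1 ≤ i) (hi' : i ≤ n) : YHRel d n u (tF n i ^ d) 1
  | g_t {i : ℕ} (hi : 1 ≤ i) (hi' : i ≤ n - 1) :
      YHRel d n u (gF n i * tF n i) (tF n (i + 1) * gF n i)
  | g_t' {i : ℕ} (hi : 1 ≤ i) (hi' : i ≤ n - 1) :
      YHRel d n u (gF n i * tF n (i + 1)) (tF n i * gF n i)
  | g_t_comm {i j : ℕ} (hi : 1 ≤ i) (hi' : i ≤ n - 1) (hj : 1 ≤ j) (hj' : j ≤ n)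
      (h1 : j ≠ i) (h2 : j ≠ i + 1) :
      YHRel d n u (gF n i * tF n j) (tF n j * gF n i)
  | quad {i : ℕ} (hi : 1 ≤ i) (hi' : i ≤ n - 1) :
      YHRel d n u (gF n i ^ 2)
        (1 + (u - 1) • eF d n i + (u - 1) • (eF d n i * gF n i))

/-- The Yokonuma–Hecke algebra `Y_{d,n}(u)`: the quotient of the free algebra on the
generators `g_1, …, g_{n-1}, t_1, …, t_n` by (the two-sided ideal generated by) the
defining relations. -/
abbrev YH (d n : ℕ) (u : ℂ) := RingQuot (YHRel d n u)

/-- The generator `g_i` of `Y_{d,n}(u)` (1-based). -/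
def yg (d n : ℕ) (u : ℂ) (i : ℕ) : YH d n u :=
  RingQuot.mkAlgHom ℂ (YHRel d n u) (gF n i)

/-- The generator `t_j` of `Y_{d,n}(u)` (1-based). -/
def yt (d n : ℕ) (u : ℂ) (j : ℕ) : YH d n u :=
  RingQuot.mkAlgHom ℂ (YHRel d n u) (tF n j)

/-- The idempotent `e_i = (1/d) ∑_{s=0}^{d-1} t_i^s t_{i+1}^{d-s}` in `Y_{d,n}(u)`. -/
def ye (d n : ℕ) (u : ℂ) (i : ℕ) : YH d n u :=
  (d : ℂ)⁻¹ • ∑ s ∈ Finset.range d, yt d n u i ^ s * yt d n u (i + 1) ^ (d - s)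

/-- The element `e_{i,j} = (1/d) ∑_{s=0}^{d-1} t_i^s t_j^{d-s}` in `Y_{d,n}(u)`. -/
def yeij (d n : ℕ) (u : ℂ) (i j : ℕ) : YH d n u :=
  (d : ℂ)⁻¹ • ∑ s ∈ Finset.range d, yt d n u i ^ s * yt d n u j ^ (d - s)

/-- The Steinberg-type element
`g_{i,i+1} = 1 + g_i + g_{i+1} + g_i g_{i+1} + g_{i+1} g_i + g_i g_{i+1} g_i`. -/
def ygSt (d n : ℕ) (u : ℂ) (i : ℕ) : YH d n u :=
  1 + yg d n u i + yg d n u (i + 1) + yg d n u i * yg d n u (i + 1)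
    + yg d n u (i + 1) * yg d n u i + yg d n u i * yg d n u (i + 1) * yg d n u i

/-- The element `r_{i,i+1} = e_i e_{i+1} g_{i,i+1}` of `Y_{d,n}(u)`. -/
def yr (d n : ℕ) (u : ℂ) (i : ℕ) : YH d n u :=
  ye d n u i * ye d n u (i + 1) * ygSt d n u i

/-- The element `c_{i,i+1} = (∑_{k=0}^{d-1} t_i^k) e_i e_{i+1} g_{i,i+1}` of `Y_{d,n}(u)`. -/
def yc (d n : ℕ) (u : ℂ) (i : ℕ) : YH d n u :=
  (∑ k ∈ Finset.range d, yt d n u i ^ k) *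
    (ye d n u i * ye d n u (i + 1) * ygSt d n u i)


/-- The relation defining `FTL_{d,n}(u)` as a quotient of `Y_{d,n}(u)`:
kill the elements `r_{i,i+1}`, `1 ≤ i ≤ n-2`. -/
inductive FTLRel (d n : ℕ) (u : ℂ) : YH d n u → YH d n u → Prop
  | mk {i : ℕ} (h1 : 1 ≤ i) (h2 : i ≤ n - 2) : FTLRel d n u (yr d n u i) 0

/-- The Framization of the Temperley–Lieb algebra `FTL_{d,n}(u)`: the quotient of
`Y_{d,n}(u)` by the two-sided ideal generated by the `r_{i,i+1}`. -/
abbrev FTL (d n : ℕ) (u : ℂ) := RingQuot (FTLRel d n u)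

/-- The defining relations of the presented algebra `A` with generators
`ℓ_1, …, ℓ_{n-1}, t_1, …, t_n` (here `gF` plays the role of `ℓ` and `tF` of `t`). -/
inductive ARel (d n : ℕ) (u : ℂ) : YHFree n → YHFree n → Prop
  | t_pow {i : ℕ} (hi : 1 ≤ i) (hi' : i ≤ n) : ARel d n u (tF n i ^ d) 1
  | t_comm {i j : ℕ} (hi : 1 ≤ i) (hi' : i ≤ n) (hj : 1 ≤ j) (hj' : j ≤ n) :
      ARel d n u (tF n i * tF n j) (tF n j * tF n i)
  | l_t_comm {i j : ℕ} (hi : 1 ≤ i) (hi' : i ≤ n - 1) (hj : 1 ≤ j) (hj' : j ≤ n)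
      (h1 : j ≠ i) (h2 : j ≠ i + 1) :
      ARel d n u (gF n i * tF n j) (tF n j * gF n i)
  | l_comm {i j : ℕ} (hi : 1 ≤ i) (hij : i + 1 < j) (hj : j ≤ n - 1) :
      ARel d n u (gF n i * gF n j) (gF n j * gF n i)
  | l_t {i : ℕ} (hi : 1 ≤ i) (hi' : i ≤ n - 1) :
      ARel d n u (gF n i * tF n i)
        (tF n (i + 1) * gF n i + (u + 1)⁻¹ • (tF n i - tF n (i + 1)))
  | l_t' {i : ℕ} (hi : 1 ≤ i) (hi' : i ≤ n - 1) :
      ARel d n u (gF n i * tF n (i + 1))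
        (tF n i * gF n i + (u + 1)⁻¹ • (tF n (i + 1) - tF n i))
  | sq {i : ℕ} (hi : 1 ≤ i) (hi' : i ≤ n - 1) :
      ARel d n u (gF n i ^ 2)
        ((u + 1)⁻¹ • (((u - 1) • eF d n i + 2) * gF n i))
  | cubic {i : ℕ} (hi : 1 ≤ i) (hi' : i ≤ n - 2) :
      ARel d n u
        (gF n i * gF n (i + 1) * gF n i -
          ((u + 1) ^ 2)⁻¹ • (((u - 1) • eF d n i + 1) * gF n i))
        (gF n (i + 1) * gF n i * gF n (i + 1) -
          ((u + 1) ^ 2)⁻¹ • (((u - 1) • eF d n (i + 1) + 1) * gF n (i + 1)))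
  | tl {i : ℕ} (hi : 1 ≤ i) (hi' : i ≤ n - 2) :
      ARel d n u
        (eF d n i * eF d n (i + 1) * (gF n i * gF n (i + 1) * gF n i))
        ((u * ((u + 1) ^ 2)⁻¹) • (eF d n i * eF d n (i + 1) * gF n i))

/-- The presented algebra `A` of Statement 6. -/
abbrev AAlg (d n : ℕ) (u : ℂ) := RingQuot (ARel d n u)

/-- The generator `ℓ_i` of `A` (1-based). -/
def lA (d n : ℕ) (u : ℂ) (i : ℕ) : AAlg d n u :=
  RingQuot.mkAlgHom ℂ (ARel d n u) (gF n i)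

/-- The generator `t_j` of `A` (1-based). -/
def tA (d n : ℕ) (u : ℂ) (j : ℕ) : AAlg d n u :=
  RingQuot.mkAlgHom ℂ (ARel d n u) (tF n j)

set_option maxHeartbeats 4000000

/-! ### Generic helper lemmas -/

section Helpers

variable {R : Type*} [Ring R] [Algebra ℂ R]

lemma Esq {d : ℕ} (hd : 1 ≤ d) {t1 t2 : R}
    (h : Commute t1 t2) (p1 : t1 ^ d = 1) (p2 : t2 ^ d = 1) :
    ((d : ℂ)⁻¹ • ∑ s ∈ Finset.range d, t1 ^ s * t2 ^ (d - s)) *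
      ((d : ℂ)⁻¹ • ∑ s ∈ Finset.range d, t1 ^ s * t2 ^ (d - s)) =
    (d : ℂ)⁻¹ • ∑ s ∈ Finset.range d, t1 ^ s * t2 ^ (d - s) := by
  obtain ⟨m, rfl⟩ : ∃ m, d = m + 1 := ⟨d - 1, by omega⟩
  set f : ZMod (m + 1) → R := fun x => t1 ^ x.val * t2 ^ (m + 1 - x.val) with hf
  have hS : (∑ s ∈ Finset.range (m + 1), t1 ^ s * t2 ^ (m + 1 - s)) = ∑ x : ZMod (m + 1), f x := by
    rw [← Fin.sum_univ_eq_sum_range (fun s => t1 ^ s * t2 ^ (m + 1 - s)) (m + 1)]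
    rfl
  have hmul : ∀ x y : ZMod (m + 1), f x * f y = f (x + y) := by
    intro x y
    have hx : x.val < m + 1 := ZMod.val_lt x
    have hy : y.val < m + 1 := ZMod.val_lt y
    have hadd : (x + y).val = (x.val + y.val) % (m + 1) := ZMod.val_add x y
    have hre : f x * f y = t1 ^ (x.val + y.val) * t2 ^ ((m + 1 - x.val) + (m + 1 - y.val)) := by
      simp only [hf]
      calc t1 ^ x.val * t2 ^ (m + 1 - x.val) * (t1 ^ y.val * t2 ^ (m + 1 - y.val))
          = t1 ^ x.val * (t2 ^ (m + 1 - x.val) * t1 ^ y.val) * t2 ^ (m + 1 - y.val) := by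
            rw [mul_assoc, mul_assoc, mul_assoc]
        _ = t1 ^ x.val * (t1 ^ y.val * t2 ^ (m + 1 - x.val)) * t2 ^ (m + 1 - y.val) := by
            rw [(h.symm.pow_pow _ _).eq]
        _ = (t1 ^ x.val * t1 ^ y.val) * (t2 ^ (m + 1 - x.val) * t2 ^ (m + 1 - y.val)) := by
            rw [mul_assoc, mul_assoc, mul_assoc]
        _ = t1 ^ (x.val + y.val) * t2 ^ ((m + 1 - x.val) + (m + 1 - y.val)) := by
            rw [pow_add, pow_add]
    rw [hre]
    show _ = t1 ^ (x + y).val * t2 ^ (m + 1 - (x + y).val)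
    by_cases hlt : x.val + y.val < m + 1
    · have h1 : (x + y).val = x.val + y.val := by rw [hadd, Nat.mod_eq_of_lt hlt]
      have h2 : (m + 1 - x.val) + (m + 1 - y.val) = (m + 1 - (x.val + y.val)) + (m + 1) := by omega
      have e2 : t2 ^ ((m + 1 - x.val) + (m + 1 - y.val)) = t2 ^ (m + 1 - (x.val + y.val)) := by
        conv_lhs => rw [h2, pow_add, p2, mul_one]
      rw [e2, h1]
    · have h1 : (x + y).val = x.val + y.val - (m + 1) := by
        rw [hadd, Nat.mod_eq_sub_mod (le_of_not_gt hlt), Nat.mod_eq_of_lt (by omega)]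
      have h2 : x.val + y.val = (x.val + y.val - (m + 1)) + (m + 1) := by omega
      have h3 : (m + 1 - x.val) + (m + 1 - y.val) = m + 1 - (x.val + y.val - (m + 1)) := by omega
      have e1 : t1 ^ (x.val + y.val) = t1 ^ (x.val + y.val - (m + 1)) := by
        conv_lhs => rw [h2, pow_add, p1, mul_one]
      rw [e1, h3, h1]
  rw [hS, smul_mul_assoc, mul_smul_comm, smul_smul, Finset.sum_mul_sum]
  have hsum : ∀ x : ZMod (m + 1), (∑ y : ZMod (m + 1), f x * f y) = ∑ y : ZMod (m + 1), f y := by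
    intro x
    rw [Fintype.sum_equiv (Equiv.addLeft x) (fun y => f x * f y) f
      (fun y => by simp only [Equiv.coe_addLeft]; exact hmul x y)]
  rw [Finset.sum_congr rfl (fun x _ => hsum x), Finset.sum_const, Finset.card_univ]
  have hcard : Fintype.card (ZMod (m + 1)) = m + 1 := ZMod.card (m + 1)
  rw [hcard, ← Nat.cast_smul_eq_nsmul ℂ (m + 1), smul_smul]
  congr 1
  have : ((m : ℂ) + 1) ≠ 0 := by
    have := Nat.cast_ne_zero (R := ℂ) (n := m + 1) |>.mpr (Nat.succ_ne_zero m)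
    simpa using this
  push_cast
  field_simp

lemma Ecomm {d : ℕ} {t1 t2 t3 t4 : R}
    (h13 : Commute t1 t3) (h14 : Commute t1 t4) (h23 : Commute t2 t3) (h24 : Commute t2 t4) :
    Commute ((d : ℂ)⁻¹ • ∑ s ∈ Finset.range d, t1 ^ s * t2 ^ (d - s))
      ((d : ℂ)⁻¹ • ∑ s ∈ Finset.range d, t3 ^ s * t4 ^ (d - s)) := by
  apply Commute.smul_left
  apply Commute.smul_right
  apply Commute.sum_left
  intro i _
  apply Commute.sum_right
  intro j _
  exact ((h13.pow_pow _ _).mul_right (h14.pow_pow _ _)).mul_left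
    ((h23.pow_pow _ _).mul_right (h24.pow_pow _ _))

lemma EEE {d : ℕ} (hd : 1 ≤ d) {t1 t2 t3 : R}
    (h12 : Commute t1 t2) (h13 : Commute t1 t3) (h23 : Commute t2 t3)
    (p1 : t1 ^ d = 1) (p2 : t2 ^ d = 1) :
    ((d : ℂ)⁻¹ • ∑ s ∈ Finset.range d, t1 ^ s * t2 ^ (d - s)) *
      ((d : ℂ)⁻¹ • ∑ s ∈ Finset.range d, t2 ^ s * t3 ^ (d - s)) *
      ((d : ℂ)⁻¹ • ∑ s ∈ Finset.range d, t1 ^ s * t2 ^ (d - s)) =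
    ((d : ℂ)⁻¹ • ∑ s ∈ Finset.range d, t1 ^ s * t2 ^ (d - s)) *
      ((d : ℂ)⁻¹ • ∑ s ∈ Finset.range d, t2 ^ s * t3 ^ (d - s)) := by
  have hc := Ecomm (d := d) h12 h13 (Commute.refl t2) h23
  rw [mul_assoc, ← hc.eq, ← mul_assoc, Esq hd h12 p1 p2]

lemma fwd_gt {u : ℂ} (hu : u + 1 ≠ 0) (a ti ti1 : R)
    (hlt : a * ti = ti1 * a + (u + 1)⁻¹ • (ti - ti1)) :
    ((u + 1) • a - 1) * ti = ti1 * ((u + 1) • a - 1) := by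
  simp only [sub_mul, mul_sub, smul_mul_assoc, mul_smul_comm, one_mul, mul_one, hlt,
    smul_add, smul_sub, smul_smul]
  match_scalars <;> field_simp <;> ring

lemma fwd_quad {u : ℂ} (hu : u + 1 ≠ 0) (a ea : R)
    (hsq : a ^ 2 = (u + 1)⁻¹ • (((u - 1) • ea + 2) * a)) :
    ((u + 1) • a - 1) ^ 2 = 1 + (u - 1) • ea + (u - 1) • (ea * ((u + 1) • a - 1)) := by
  have h2 : a * a = (u + 1)⁻¹ • (((u - 1) • ea + 2) * a) := by rw [← pow_two]; exact hsq
  rw [pow_two]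
  simp only [sub_mul, mul_sub, smul_mul_assoc, mul_smul_comm, one_mul, mul_one, smul_add,
    smul_sub, smul_smul, add_mul, mul_add, h2, ← one_add_one_eq_two]
  match_scalars <;> field_simp <;> ring

lemma fwd_braid {u : ℂ} (hu : u + 1 ≠ 0) (a b ea eb : R)
    (hsqa : a ^ 2 = (u + 1)⁻¹ • (((u - 1) • ea + 2) * a))
    (hsqb : b ^ 2 = (u + 1)⁻¹ • (((u - 1) • eb + 2) * b))
    (hcubic : a * b * a - ((u + 1) ^ 2)⁻¹ • (((u - 1) • ea + 1) * a)
        = b * a * b - ((u + 1) ^ 2)⁻¹ • (((u - 1) • eb + 1) * b)) :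
    ((u + 1) • a - 1) * ((u + 1) • b - 1) * ((u + 1) • a - 1)
      = ((u + 1) • b - 1) * ((u + 1) • a - 1) * ((u + 1) • b - 1) := by
  have ha : a * a = (u + 1)⁻¹ • (((u - 1) • ea + 2) * a) := by rw [← pow_two]; exact hsqa
  have hb : b * b = (u + 1)⁻¹ • (((u - 1) • eb + 2) * b) := by rw [← pow_two]; exact hsqb
  have key : a * b * a = b * a * b + (((u + 1) ^ 2)⁻¹ • (((u - 1) • ea + 1) * a)
      - ((u + 1) ^ 2)⁻¹ • (((u - 1) • eb + 1) * b)) := by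
    have h := sub_eq_sub_iff_add_eq_add.mp hcubic
    have h2 := eq_sub_of_add_eq h
    rwa [add_sub_assoc] at h2
  simp only [sub_mul, mul_sub, smul_mul_assoc, mul_smul_comm, one_mul, mul_one, smul_add,
    smul_sub, smul_smul, add_mul, mul_add, key, ha, hb, ← one_add_one_eq_two]
  match_scalars <;> field_simp <;> ring

lemma fwd_r {u : ℂ} (hu : u + 1 ≠ 0) (c a b ea : R)
    (hsqa : a ^ 2 = (u + 1)⁻¹ • (((u - 1) • ea + 2) * a))
    (htl : c * (a * b * a) = (u * ((u + 1) ^ 2)⁻¹) • (c * a))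
    (hce : c * ea = c) :
    c * (1 + ((u + 1) • a - 1) + ((u + 1) • b - 1)
      + ((u + 1) • a - 1) * ((u + 1) • b - 1)
      + ((u + 1) • b - 1) * ((u + 1) • a - 1)
      + ((u + 1) • a - 1) * ((u + 1) • b - 1) * ((u + 1) • a - 1)) = 0 := by
  have ha : a * a = (u + 1)⁻¹ • (((u - 1) • ea + 2) * a) := by rw [← pow_two]; exact hsqa
  have hcea : c * (ea * a) = c * a := by rw [← mul_assoc, hce]
  simp only [mul_add, add_mul, mul_sub, sub_mul, mul_one, one_mul, smul_mul_assoc,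
    mul_smul_comm, smul_add, smul_sub, smul_smul, ha, ← one_add_one_eq_two]
  rw [htl, hcea]
  match_scalars <;> field_simp <;> ring

lemma bwd_lt {u : ℂ} (hu : u + 1 ≠ 0) (g ti ti1 : R) (hgt : g * ti = ti1 * g) :
    ((u + 1)⁻¹ • (g + 1)) * ti = ti1 * ((u + 1)⁻¹ • (g + 1)) + (u + 1)⁻¹ • (ti - ti1) := by
  simp only [smul_mul_assoc, mul_smul_comm, add_mul, mul_add, one_mul, mul_one, hgt,
    smul_add, smul_sub]
  match_scalars <;> field_simp <;> ring

lemma bwd_sq {u : ℂ} (hu : u + 1 ≠ 0) (g ea : R)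
    (hq : g ^ 2 = 1 + (u - 1) • ea + (u - 1) • (ea * g)) :
    ((u + 1)⁻¹ • (g + 1)) ^ 2 = (u + 1)⁻¹ • (((u - 1) • ea + 2) * ((u + 1)⁻¹ • (g + 1))) := by
  have h2 : g * g = 1 + (u - 1) • ea + (u - 1) • (ea * g) := by rw [← pow_two]; exact hq
  rw [pow_two]
  simp only [smul_mul_assoc, mul_smul_comm, add_mul, mul_add, one_mul, mul_one, h2,
    smul_add, smul_sub, smul_smul, ← one_add_one_eq_two]
  match_scalars <;> field_simp <;> ring

lemma bwd_cubic {u : ℂ} (hu : u + 1 ≠ 0) (ga gb ea eb : R)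
    (hbraid : ga * gb * ga = gb * ga * gb)
    (hqa : ga ^ 2 = 1 + (u - 1) • ea + (u - 1) • (ea * ga))
    (hqb : gb ^ 2 = 1 + (u - 1) • eb + (u - 1) • (eb * gb)) :
    ((u + 1)⁻¹ • (ga + 1)) * ((u + 1)⁻¹ • (gb + 1)) * ((u + 1)⁻¹ • (ga + 1))
      - ((u + 1) ^ 2)⁻¹ • (((u - 1) • ea + 1) * ((u + 1)⁻¹ • (ga + 1)))
    = ((u + 1)⁻¹ • (gb + 1)) * ((u + 1)⁻¹ • (ga + 1)) * ((u + 1)⁻¹ • (gb + 1))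
      - ((u + 1) ^ 2)⁻¹ • (((u - 1) • eb + 1) * ((u + 1)⁻¹ • (gb + 1))) := by
  have ha : ga * ga = 1 + (u - 1) • ea + (u - 1) • (ea * ga) := by rw [← pow_two]; exact hqa
  have hb : gb * gb = 1 + (u - 1) • eb + (u - 1) • (eb * gb) := by rw [← pow_two]; exact hqb
  simp only [smul_mul_assoc, mul_smul_comm, add_mul, mul_add, one_mul, mul_one,
    sub_mul, mul_sub, hbraid, ha, hb, smul_add, smul_sub, smul_smul]
  match_scalars <;> field_simp <;> ring

lemma bwd_tl {u : ℂ} (hu : u + 1 ≠ 0) (c ga gb ea : R)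
    (hgSt : c * (1 + ga + gb + ga * gb + gb * ga + ga * gb * ga) = 0)
    (hqa : ga ^ 2 = 1 + (u - 1) • ea + (u - 1) • (ea * ga))
    (hce : c * ea = c) :
    c * (((u + 1)⁻¹ • (ga + 1)) * ((u + 1)⁻¹ • (gb + 1)) * ((u + 1)⁻¹ • (ga + 1)))
    = (u * ((u + 1) ^ 2)⁻¹) • (c * ((u + 1)⁻¹ • (ga + 1))) := by
  have ha : ga * ga = 1 + (u - 1) • ea + (u - 1) • (ea * ga) := by rw [← pow_two]; exact hqa
  have hcea : c * (ea * ga) = c * ga := by rw [← mul_assoc, hce]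
  have h := hgSt
  simp only [mul_add, mul_one] at h
  have h0 : c * (ga * gb * ga)
      = -(c + c * ga + c * gb + c * (ga * gb) + c * (gb * ga)) :=
    eq_neg_of_add_eq_zero_right h
  simp only [smul_mul_assoc, mul_smul_comm, add_mul, mul_add, one_mul, mul_one,
    ha, smul_add, smul_sub, smul_smul]
  rw [h0, hce, hcea]
  match_scalars
  all_goals field_simp
  all_goals try ring
  all_goals tauto

end Helpers

/-! ### Concrete generators and relations in `A` -/

section ASide
variable (d n : ℕ) (u : ℂ)

/-- The element `e_i` in `A`. -/
def eAe (i : ℕ) : AAlg d n u :=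
  (d : ℂ)⁻¹ • ∑ s ∈ Finset.range d, tA d n u i ^ s * tA d n u (i + 1) ^ (d - s)

lemma mkA_eF (i : ℕ) : RingQuot.mkAlgHom ℂ (ARel d n u) (eF d n i) = eAe d n u i := by
  simp [eF, eAe, tA, map_smul, map_sum, map_mul, map_pow]

lemma A_t_pow {i : ℕ} (hi : 1 ≤ i) (hi' : i ≤ n) : tA d n u i ^ d = 1 := by
  have h := RingQuot.mkAlgHom_rel ℂ (ARel.t_pow (d := d) (u := u) hi hi')
  simpa [map_pow, map_one, tA] using h

lemma A_t_comm {i j : ℕ} (hi : 1 ≤ i) (hi' : i ≤ n) (hj : 1 ≤ j) (hj' : j ≤ n) :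
    Commute (tA d n u i) (tA d n u j) := by
  have h := RingQuot.mkAlgHom_rel ℂ (ARel.t_comm (d := d) (u := u) hi hi' hj hj')
  simpa [map_mul, tA, Commute, SemiconjBy] using h

lemma A_lt {i : ℕ} (hi : 1 ≤ i) (hi' : i ≤ n - 1) :
    lA d n u i * tA d n u i
      = tA d n u (i + 1) * lA d n u i + (u + 1)⁻¹ • (tA d n u i - tA d n u (i + 1)) := by
  have h := RingQuot.mkAlgHom_rel ℂ (ARel.l_t (d := d) (u := u) hi hi')
  simpa [map_mul, map_add, map_smul, map_sub, lA, tA] using h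

lemma A_lt' {i : ℕ} (hi : 1 ≤ i) (hi' : i ≤ n - 1) :
    lA d n u i * tA d n u (i + 1)
      = tA d n u i * lA d n u i + (u + 1)⁻¹ • (tA d n u (i + 1) - tA d n u i) := by
  have h := RingQuot.mkAlgHom_rel ℂ (ARel.l_t' (d := d) (u := u) hi hi')
  simpa [map_mul, map_add, map_smul, map_sub, lA, tA] using h

lemma A_ltc {i j : ℕ} (hi : 1 ≤ i) (hi' : i ≤ n - 1) (hj : 1 ≤ j) (hj' : j ≤ n)
    (h1 : j ≠ i) (h2 : j ≠ i + 1) : Commute (lA d n u i) (tA d n u j) := by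
  have h := RingQuot.mkAlgHom_rel ℂ (ARel.l_t_comm (d := d) (u := u) hi hi' hj hj' h1 h2)
  simpa [map_mul, lA, tA, Commute, SemiconjBy] using h

lemma A_lcomm {i j : ℕ} (hi : 1 ≤ i) (hij : i + 1 < j) (hj : j ≤ n - 1) :
    Commute (lA d n u i) (lA d n u j) := by
  have h := RingQuot.mkAlgHom_rel ℂ (ARel.l_comm (d := d) (u := u) hi hij hj)
  simpa [map_mul, lA, Commute, SemiconjBy] using h

lemma A_sq {i : ℕ} (hi : 1 ≤ i) (hi' : i ≤ n - 1) :
    lA d n u i ^ 2 = (u + 1)⁻¹ • (((u - 1) • eAe d n u i + 2) * lA d n u i) := by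
  have h := RingQuot.mkAlgHom_rel ℂ (ARel.sq (d := d) (u := u) hi hi')
  simpa [map_pow, map_smul, map_mul, map_add, map_ofNat, mkA_eF, lA] using h

lemma A_cubic {i : ℕ} (hi : 1 ≤ i) (hi' : i ≤ n - 2) :
    lA d n u i * lA d n u (i + 1) * lA d n u i
        - ((u + 1) ^ 2)⁻¹ • (((u - 1) • eAe d n u i + 1) * lA d n u i)
      = lA d n u (i + 1) * lA d n u i * lA d n u (i + 1)
        - ((u + 1) ^ 2)⁻¹ • (((u - 1) • eAe d n u (i + 1) + 1) * lA d n u (i + 1)) := by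
  have h := RingQuot.mkAlgHom_rel ℂ (ARel.cubic (d := d) (u := u) hi hi')
  simpa [map_sub, map_smul, map_mul, map_add, map_one, mkA_eF, lA] using h

lemma A_tl {i : ℕ} (hi : 1 ≤ i) (hi' : i ≤ n - 2) :
    eAe d n u i * eAe d n u (i + 1) * (lA d n u i * lA d n u (i + 1) * lA d n u i)
      = (u * ((u + 1) ^ 2)⁻¹) • (eAe d n u i * eAe d n u (i + 1) * lA d n u i) := by
  have h := RingQuot.mkAlgHom_rel ℂ (ARel.tl (d := d) (u := u) hi hi')
  simpa [map_smul, map_mul, mkA_eF, lA] using h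

lemma A_ce (hd : 1 ≤ d) {i : ℕ} (hi : 1 ≤ i) (hi' : i ≤ n - 2) :
    eAe d n u i * eAe d n u (i + 1) * eAe d n u i = eAe d n u i * eAe d n u (i + 1) := by
  have hn3 : 3 ≤ n := by omega
  simp only [eAe]
  exact EEE hd
    (A_t_comm d n u (by omega) (by omega) (by omega) (by omega))
    (A_t_comm d n u (by omega) (by omega) (by omega) (by omega))
    (A_t_comm d n u (by omega) (by omega) (by omega) (by omega))
    (A_t_pow d n u (by omega) (by omega)) (A_t_pow d n u (by omega) (by omega))

end ASide

/-! ### The forward map `FTL → A` -/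

section Forward
variable (d n : ℕ) (u : ℂ)

/-- The forward substitution on the free algebra. -/
def phi0 : YHFree n →ₐ[ℂ] AAlg d n u :=
  FreeAlgebra.lift ℂ (fun x => Sum.elim
    (fun i : Fin (n - 1) => (u + 1) • lA d n u (i.1 + 1) - 1)
    (fun j : Fin n => tA d n u (j.1 + 1)) x)

lemma phi0_gF {i : ℕ} (hi : 1 ≤ i) (hi' : i ≤ n - 1) :
    phi0 d n u (gF n i) = (u + 1) • lA d n u i - 1 := by
  rw [gF, dif_pos ⟨hi, hi'⟩, phi0, FreeAlgebra.lift_ι_apply]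
  simp only [Sum.elim_inl]
  rw [Nat.sub_add_cancel hi]

lemma phi0_tF {j : ℕ} (hj : 1 ≤ j) (hj' : j ≤ n) :
    phi0 d n u (tF n j) = tA d n u j := by
  rw [tF, dif_pos ⟨hj, hj'⟩, phi0, FreeAlgebra.lift_ι_apply]
  simp only [Sum.elim_inr]
  rw [Nat.sub_add_cancel hj]

lemma phi0_eF {i : ℕ} (hi : 1 ≤ i) (hi' : i + 1 ≤ n) :
    phi0 d n u (eF d n i) = eAe d n u i := by
  simp only [eF, eAe, map_smul, map_sum, map_mul, map_pow,
    phi0_tF d n u hi (by omega), phi0_tF d n u (by omega : 1 ≤ i + 1) hi']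

lemma phi0_rel (hu1 : u + 1 ≠ 0) :
    ∀ ⦃x y : YHFree n⦄, YHRel d n u x y → phi0 d n u x = phi0 d n u y := by
  intro x y hxy
  induction hxy with
  | @g_comm i j hi hij hj =>
    simp only [map_mul, phi0_gF d n u hi (by omega), phi0_gF d n u (by omega) hj]
    have hc : Commute (lA d n u i) (lA d n u j) := A_lcomm d n u hi hij hj
    exact (((hc.smul_left (u + 1)).smul_right (u + 1)).sub_left
      (Commute.one_left _)).sub_right (Commute.one_right _) |>.eq
  | @braid i hi hi' =>
    simp only [map_mul, phi0_gF d n u hi (by omega), phi0_gF d n u (by omega) hi']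
    exact fwd_braid hu1 _ _ _ _ (A_sq d n u hi (by omega)) (A_sq d n u (by omega) hi')
      (A_cubic d n u hi (by omega))
  | @t_comm i j hi hi' hj hj' =>
    simp only [map_mul, phi0_tF d n u hi hi', phi0_tF d n u hj hj']
    exact (A_t_comm d n u hi hi' hj hj').eq
  | @t_pow i hi hi' =>
    simp only [map_pow, map_one, phi0_tF d n u hi hi']
    exact A_t_pow d n u hi hi'
  | @g_t i hi hi' =>
    simp only [map_mul, phi0_gF d n u hi hi', phi0_tF d n u hi (by omega),
      phi0_tF d n u (by omega : 1 ≤ i + 1) (by omega)]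
    exact fwd_gt hu1 _ _ _ (A_lt d n u hi hi')
  | @g_t' i hi hi' =>
    simp only [map_mul, phi0_gF d n u hi hi', phi0_tF d n u hi (by omega),
      phi0_tF d n u (by omega : 1 ≤ i + 1) (by omega)]
    exact fwd_gt hu1 _ _ _ (A_lt' d n u hi hi')
  | @g_t_comm i j hi hi' hj hj' h1 h2 =>
    simp only [map_mul, phi0_gF d n u hi hi', phi0_tF d n u hj hj']
    have hc : Commute (lA d n u i) (tA d n u j) := A_ltc d n u hi hi' hj hj' h1 h2
    exact ((hc.smul_left (u + 1)).sub_left (Commute.one_left _)).eq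
  | @quad i hi hi' =>
    simp only [map_pow, map_add, map_one, map_smul, map_mul, phi0_gF d n u hi hi',
      phi0_eF d n u hi (by omega)]
    exact fwd_quad hu1 _ _ (A_sq d n u hi hi')

/-- The forward map on `Y_{d,n}(u)`. -/
def phiY (hu1 : u + 1 ≠ 0) : YH d n u →ₐ[ℂ] AAlg d n u :=
  RingQuot.liftAlgHom ℂ ⟨phi0 d n u, phi0_rel d n u hu1⟩

lemma phiY_mk (hu1 : u + 1 ≠ 0) (x : YHFree n) :
    phiY d n u hu1 (RingQuot.mkAlgHom ℂ (YHRel d n u) x) = phi0 d n u x :=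
  RingQuot.liftAlgHom_mkAlgHom_apply ℂ _ _ x

lemma phiY_yg (hu1 : u + 1 ≠ 0) {i : ℕ} (hi : 1 ≤ i) (hi' : i ≤ n - 1) :
    phiY d n u hu1 (yg d n u i) = (u + 1) • lA d n u i - 1 := by
  rw [yg, phiY_mk, phi0_gF d n u hi hi']

lemma phiY_yt (hu1 : u + 1 ≠ 0) {j : ℕ} (hj : 1 ≤ j) (hj' : j ≤ n) :
    phiY d n u hu1 (yt d n u j) = tA d n u j := by
  rw [yt, phiY_mk, phi0_tF d n u hj hj']

lemma phiY_ye (hu1 : u + 1 ≠ 0) {i : ℕ} (hi : 1 ≤ i) (hi' : i + 1 ≤ n) :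
    phiY d n u hu1 (ye d n u i) = eAe d n u i := by
  simp only [ye, eAe, map_smul, map_sum, map_mul, map_pow,
    phiY_yt d n u hu1 hi (by omega), phiY_yt d n u hu1 (by omega : 1 ≤ i + 1) hi']

lemma phiY_rel (hd : 1 ≤ d) (hu1 : u + 1 ≠ 0) :
    ∀ ⦃x y : YH d n u⦄, FTLRel d n u x y → phiY d n u hu1 x = phiY d n u hu1 y := by
  intro x y hxy
  induction hxy with
  | @mk i h1 h2 =>
    rw [map_zero, yr, ygSt]
    simp only [map_mul, map_add, map_one,
      phiY_ye d n u hu1 h1 (by omega), phiY_ye d n u hu1 (by omega : 1 ≤ i + 1) (by omega),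
      phiY_yg d n u hu1 h1 (by omega), phiY_yg d n u hu1 (by omega : 1 ≤ i + 1) (by omega)]
    exact fwd_r hu1 _ _ _ _ (A_sq d n u h1 (by omega))
      (A_tl d n u h1 h2) (A_ce d n u hd h1 h2)

/-- The forward map `FTL → A`. -/
def Phi (hd : 1 ≤ d) (hu1 : u + 1 ≠ 0) : FTL d n u →ₐ[ℂ] AAlg d n u :=
  RingQuot.liftAlgHom ℂ ⟨phiY d n u hu1, phiY_rel d n u hd hu1⟩

lemma Phi_mk (hd : 1 ≤ d) (hu1 : u + 1 ≠ 0) (x : YH d n u) :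
    Phi d n u hd hu1 (RingQuot.mkAlgHom ℂ (FTLRel d n u) x) = phiY d n u hu1 x :=
  RingQuot.liftAlgHom_mkAlgHom_apply ℂ _ _ x

end Forward

/-! ### Concrete generators and relations in `FTL` -/

section FTLSide
variable (d n : ℕ) (u : ℂ)

/-- The image of `g_i` in `FTL`. -/
def FG (i : ℕ) : FTL d n u := RingQuot.mkAlgHom ℂ (FTLRel d n u) (yg d n u i)

/-- The image of `t_j` in `FTL`. -/
def FT (j : ℕ) : FTL d n u := RingQuot.mkAlgHom ℂ (FTLRel d n u) (yt d n u j)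

/-- The element `e_i` in `FTL`. -/
def FE (i : ℕ) : FTL d n u :=
  (d : ℂ)⁻¹ • ∑ s ∈ Finset.range d, FT d n u i ^ s * FT d n u (i + 1) ^ (d - s)

lemma mkF_ye (i : ℕ) :
    RingQuot.mkAlgHom ℂ (FTLRel d n u) (ye d n u i) = FE d n u i := by
  simp [ye, FE, FT, map_smul, map_sum, map_mul, map_pow]

lemma mkY_eF (i : ℕ) :
    RingQuot.mkAlgHom ℂ (YHRel d n u) (eF d n i) = ye d n u i := by
  simp [eF, ye, yt, map_smul, map_sum, map_mul, map_pow]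

lemma F_t_pow {i : ℕ} (hi : 1 ≤ i) (hi' : i ≤ n) : FT d n u i ^ d = 1 := by
  have h := congrArg (RingQuot.mkAlgHom ℂ (FTLRel d n u))
    (RingQuot.mkAlgHom_rel ℂ (YHRel.t_pow (d := d) (u := u) hi hi'))
  simpa [map_pow, map_one, FT, yt] using h

lemma F_t_comm {i j : ℕ} (hi : 1 ≤ i) (hi' : i ≤ n) (hj : 1 ≤ j) (hj' : j ≤ n) :
    Commute (FT d n u i) (FT d n u j) := by
  have h := congrArg (RingQuot.mkAlgHom ℂ (FTLRel d n u))
    (RingQuot.mkAlgHom_rel ℂ (YHRel.t_comm (d := d) (u := u) hi hi' hj hj'))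
  simpa [map_mul, FT, yt, Commute, SemiconjBy] using h

lemma F_gt {i : ℕ} (hi : 1 ≤ i) (hi' : i ≤ n - 1) :
    FG d n u i * FT d n u i = FT d n u (i + 1) * FG d n u i := by
  have h := congrArg (RingQuot.mkAlgHom ℂ (FTLRel d n u))
    (RingQuot.mkAlgHom_rel ℂ (YHRel.g_t (d := d) (u := u) hi hi'))
  simpa [map_mul, FT, FG, yt, yg] using h

lemma F_gt' {i : ℕ} (hi : 1 ≤ i) (hi' : i ≤ n - 1) :
    FG d n u i * FT d n u (i + 1) = FT d n u i * FG d n u i := by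
  have h := congrArg (RingQuot.mkAlgHom ℂ (FTLRel d n u))
    (RingQuot.mkAlgHom_rel ℂ (YHRel.g_t' (d := d) (u := u) hi hi'))
  simpa [map_mul, FT, FG, yt, yg] using h

lemma F_gtc {i j : ℕ} (hi : 1 ≤ i) (hi' : i ≤ n - 1) (hj : 1 ≤ j) (hj' : j ≤ n)
    (h1 : j ≠ i) (h2 : j ≠ i + 1) : Commute (FG d n u i) (FT d n u j) := by
  have h := congrArg (RingQuot.mkAlgHom ℂ (FTLRel d n u))
    (RingQuot.mkAlgHom_rel ℂ (YHRel.g_t_comm (d := d) (u := u) hi hi' hj hj' h1 h2))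
  simpa [map_mul, FT, FG, yt, yg, Commute, SemiconjBy] using h

lemma F_gcomm {i j : ℕ} (hi : 1 ≤ i) (hij : i + 1 < j) (hj : j ≤ n - 1) :
    Commute (FG d n u i) (FG d n u j) := by
  have h := congrArg (RingQuot.mkAlgHom ℂ (FTLRel d n u))
    (RingQuot.mkAlgHom_rel ℂ (YHRel.g_comm (d := d) (u := u) hi hij hj))
  simpa [map_mul, FG, yg, Commute, SemiconjBy] using h

lemma F_quad {i : ℕ} (hi : 1 ≤ i) (hi' : i ≤ n - 1) :
    FG d n u i ^ 2 = 1 + (u - 1) • FE d n u i + (u - 1) • (FE d n u i * FG d n u i) := by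
  have h := congrArg (RingQuot.mkAlgHom ℂ (FTLRel d n u))
    (RingQuot.mkAlgHom_rel ℂ (YHRel.quad (d := d) (u := u) hi hi'))
  simpa [map_pow, map_add, map_one, map_smul, map_mul, mkY_eF, mkF_ye, FG, yg] using h

lemma F_braid {i : ℕ} (hi : 1 ≤ i) (hi' : i + 1 ≤ n - 1) :
    FG d n u i * FG d n u (i + 1) * FG d n u i
      = FG d n u (i + 1) * FG d n u i * FG d n u (i + 1) := by
  have h := congrArg (RingQuot.mkAlgHom ℂ (FTLRel d n u))
    (RingQuot.mkAlgHom_rel ℂ (YHRel.braid (d := d) (u := u) hi hi'))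
  simpa [map_mul, FG, yg] using h

lemma F_gSt {i : ℕ} (h1 : 1 ≤ i) (h2 : i ≤ n - 2) :
    FE d n u i * FE d n u (i + 1) *
      (1 + FG d n u i + FG d n u (i + 1) + FG d n u i * FG d n u (i + 1)
        + FG d n u (i + 1) * FG d n u i
        + FG d n u i * FG d n u (i + 1) * FG d n u i) = 0 := by
  have h := RingQuot.mkAlgHom_rel ℂ (FTLRel.mk (d := d) (u := u) h1 h2)
  simpa [yr, ygSt, map_mul, map_add, map_one, map_zero, mkF_ye, FG] using h

lemma F_ce (hd : 1 ≤ d) {i : ℕ} (hi : 1 ≤ i) (hi' : i ≤ n - 2) :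
    FE d n u i * FE d n u (i + 1) * FE d n u i = FE d n u i * FE d n u (i + 1) := by
  simp only [FE]
  exact EEE (R := FTL d n u) hd
    (F_t_comm d n u (i := i) (j := i + 1) (by omega) (by omega) (by omega) (by omega))
    (F_t_comm d n u (i := i) (j := i + 1 + 1) (by omega) (by omega) (by omega) (by omega))
    (F_t_comm d n u (i := i + 1) (j := i + 1 + 1) (by omega) (by omega) (by omega) (by omega))
    (F_t_pow d n u (i := i) (by omega) (by omega))
    (F_t_pow d n u (i := i + 1) (by omega) (by omega))

end FTLSide

/-! ### The backward map `A → FTL` -/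

section Backward
variable (d n : ℕ) (u : ℂ)

/-- The backward substitution on the free algebra. -/
def psi0 : YHFree n →ₐ[ℂ] FTL d n u :=
  FreeAlgebra.lift ℂ (fun x => Sum.elim
    (fun i : Fin (n - 1) => (u + 1)⁻¹ • (FG d n u (i.1 + 1) + 1))
    (fun j : Fin n => FT d n u (j.1 + 1)) x)

lemma psi0_gF {i : ℕ} (hi : 1 ≤ i) (hi' : i ≤ n - 1) :
    psi0 d n u (gF n i) = (u + 1)⁻¹ • (FG d n u i + 1) := by
  rw [gF, dif_pos ⟨hi, hi'⟩, psi0, FreeAlgebra.lift_ι_apply]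
  simp only [Sum.elim_inl]
  rw [Nat.sub_add_cancel hi]

lemma psi0_tF {j : ℕ} (hj : 1 ≤ j) (hj' : j ≤ n) :
    psi0 d n u (tF n j) = FT d n u j := by
  rw [tF, dif_pos ⟨hj, hj'⟩, psi0, FreeAlgebra.lift_ι_apply]
  simp only [Sum.elim_inr]
  rw [Nat.sub_add_cancel hj]

lemma psi0_eF {i : ℕ} (hi : 1 ≤ i) (hi' : i + 1 ≤ n) :
    psi0 d n u (eF d n i) = FE d n u i := by
  simp only [eF, FE, map_smul, map_sum, map_mul, map_pow,
    psi0_tF d n u hi (by omega), psi0_tF d n u (by omega : 1 ≤ i + 1) hi']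

lemma psi0_rel (hd : 1 ≤ d) (hu1 : u + 1 ≠ 0) :
    ∀ ⦃x y : YHFree n⦄, ARel d n u x y → psi0 d n u x = psi0 d n u y := by
  intro x y hxy
  induction hxy with
  | @t_pow i hi hi' =>
    simp only [map_pow, map_one, psi0_tF d n u hi hi']
    exact F_t_pow d n u hi hi'
  | @t_comm i j hi hi' hj hj' =>
    simp only [map_mul, psi0_tF d n u hi hi', psi0_tF d n u hj hj']
    exact (F_t_comm d n u hi hi' hj hj').eq
  | @l_t_comm i j hi hi' hj hj' h1 h2 =>
    simp only [map_mul, psi0_gF d n u hi hi', psi0_tF d n u hj hj']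
    have hc : Commute (FG d n u i) (FT d n u j) := F_gtc d n u hi hi' hj hj' h1 h2
    exact ((hc.add_left (Commute.one_left _)).smul_left ((u + 1)⁻¹)).eq
  | @l_comm i j hi hij hj =>
    simp only [map_mul, psi0_gF d n u hi (by omega), psi0_gF d n u (by omega) hj]
    have hc : Commute (FG d n u i) (FG d n u j) := F_gcomm d n u hi hij hj
    exact (((hc.add_left (Commute.one_left _)).add_right
      (Commute.one_right _)).smul_left ((u + 1)⁻¹)).smul_right ((u + 1)⁻¹) |>.eq
  | @l_t i hi hi' =>
    simp only [map_mul, map_add, map_smul, map_sub, psi0_gF d n u hi hi',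
      psi0_tF d n u hi (by omega), psi0_tF d n u (by omega : 1 ≤ i + 1) (by omega)]
    exact bwd_lt (R := FTL d n u) hu1 _ _ _ (F_gt d n u hi hi')
  | @l_t' i hi hi' =>
    simp only [map_mul, map_add, map_smul, map_sub, psi0_gF d n u hi hi',
      psi0_tF d n u hi (by omega), psi0_tF d n u (by omega : 1 ≤ i + 1) (by omega)]
    exact bwd_lt (R := FTL d n u) hu1 _ _ _ (F_gt' d n u hi hi')
  | @sq i hi hi' =>
    simp only [map_pow, map_smul, map_mul, map_add, map_ofNat, psi0_gF d n u hi hi',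
      psi0_eF d n u (i := i) hi (by omega)]
    exact bwd_sq (R := FTL d n u) hu1 _ _ (F_quad d n u hi hi')
  | @cubic i hi hi' =>
    simp only [map_sub, map_smul, map_mul, map_add, map_one,
      psi0_gF d n u hi (by omega), psi0_gF d n u (by omega : 1 ≤ i + 1) (by omega),
      psi0_eF d n u (i := i) hi (by omega), psi0_eF d n u (i := i + 1) (by omega) (by omega)]
    exact bwd_cubic (R := FTL d n u) hu1 _ _ _ _ (F_braid d n u hi (by omega))
      (F_quad d n u (i := i) hi (by omega)) (F_quad d n u (i := i + 1) (by omega) (by omega))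
  | @tl i hi hi' =>
    simp only [map_smul, map_mul, psi0_gF d n u hi (by omega),
      psi0_gF d n u (by omega : 1 ≤ i + 1) (by omega),
      psi0_eF d n u (i := i) hi (by omega), psi0_eF d n u (i := i + 1) (by omega) (by omega)]
    exact bwd_tl (R := FTL d n u) hu1 _ _ _ _ (F_gSt d n u hi hi') (F_quad d n u (i := i) hi (by omega))
      (F_ce d n u hd hi hi')

/-- The backward map `A → FTL`. -/
def Psi (hd : 1 ≤ d) (hu1 : u + 1 ≠ 0) : AAlg d n u →ₐ[ℂ] FTL d n u :=
  RingQuot.liftAlgHom ℂ ⟨psi0 d n u, psi0_rel d n u hd hu1⟩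

lemma Psi_mk (hd : 1 ≤ d) (hu1 : u + 1 ≠ 0) (x : YHFree n) :
    Psi d n u hd hu1 (RingQuot.mkAlgHom ℂ (ARel d n u) x) = psi0 d n u x :=
  RingQuot.liftAlgHom_mkAlgHom_apply ℂ _ _ x

end Backward

/-! ### The isomorphism -/

section Iso
variable (d n : ℕ) (u : ℂ)

lemma iota_inl (i : Fin (n - 1)) :
    gF n (i.1 + 1) = FreeAlgebra.ι ℂ (Sum.inl i : YHIdx n) := by
  have h2 := i.2
  rw [gF, dif_pos ⟨by omega, by omega⟩]
  congr

lemma iota_inr (j : Fin n) :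
    tF n (j.1 + 1) = FreeAlgebra.ι ℂ (Sum.inr j : YHIdx n) := by
  have h2 := j.2
  rw [tF, dif_pos ⟨by omega, by omega⟩]
  congr

lemma phi_psi (hd : 1 ≤ d) (hu1 : u + 1 ≠ 0) :
    (Phi d n u hd hu1).comp (Psi d n u hd hu1) = AlgHom.id ℂ (AAlg d n u) := by
  apply RingQuot.ringQuot_ext' ℂ
  apply FreeAlgebra.hom_ext
  funext x
  rcases x with i | j
  · have h2 := i.2
    simp only [Function.comp_apply, AlgHom.coe_comp, AlgHom.coe_id, id_eq, AlgHom.comp_apply,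
      AlgHom.id_apply]
    rw [← iota_inl, Psi_mk, psi0_gF d n u (by omega) (by omega), map_smul, map_add, map_one,
      FG, Phi_mk, phiY_yg d n u hu1 (by omega) (by omega), sub_add_cancel, smul_smul,
      inv_mul_cancel₀ hu1, one_smul]
    rfl
  · have h2 := j.2
    simp only [Function.comp_apply, AlgHom.coe_comp, AlgHom.coe_id, id_eq, AlgHom.comp_apply,
      AlgHom.id_apply]
    rw [← iota_inr, Psi_mk, psi0_tF d n u (by omega) (by omega),
      FT, Phi_mk, phiY_yt d n u hu1 (by omega) (by omega)]
    rfl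

lemma psi_phi (hd : 1 ≤ d) (hu1 : u + 1 ≠ 0) :
    (Psi d n u hd hu1).comp (Phi d n u hd hu1) = AlgHom.id ℂ (FTL d n u) := by
  apply RingQuot.ringQuot_ext' ℂ
  apply RingQuot.ringQuot_ext' ℂ
  apply FreeAlgebra.hom_ext
  funext x
  rcases x with i | j
  · have h2 := i.2
    simp only [Function.comp_apply, AlgHom.coe_comp, AlgHom.coe_id, id_eq, AlgHom.comp_apply,
      AlgHom.id_apply]
    rw [← iota_inl]
    rw [show RingQuot.mkAlgHom ℂ (YHRel d n u) (gF n (i.1 + 1)) = yg d n u (i.1 + 1) from rfl]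
    rw [Phi_mk, phiY_yg d n u hu1 (by omega) (by omega), map_sub, map_smul, map_one,
      lA, Psi_mk, psi0_gF d n u (by omega) (by omega), smul_smul,
      mul_inv_cancel₀ hu1, one_smul]
    exact (add_sub_cancel_right (FG d n u (i.1 + 1)) (1 : FTL d n u)).trans rfl
  · have h2 := j.2
    simp only [Function.comp_apply, AlgHom.coe_comp, AlgHom.coe_id, id_eq, AlgHom.comp_apply,
      AlgHom.id_apply]
    rw [← iota_inr]
    rw [show RingQuot.mkAlgHom ℂ (YHRel d n u) (tF n (j.1 + 1)) = yt d n u (j.1 + 1) from rfl]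
    rw [Phi_mk, phiY_yt d n u hu1 (by omega) (by omega), tA, Psi_mk,
      psi0_tF d n u (by omega) (by omega)]
    rfl

end Iso

/-- For `u ∉ {0, -1}`, the assignment `g_i ↦ (u+1)ℓ_i − 1`, `t_j ↦ t_j`
induces a well-defined `ℂ`-algebra isomorphism from `FTL_{d,n}(u)` onto `A`. -/
theorem stmt6 (d n : ℕ) (hd : 1 ≤ d) (hn : 3 ≤ n) (u : ℂ) (hu : u ≠ 0) (hu' : u ≠ -1) :
    ∃ φ : FTL d n u ≃ₐ[ℂ] AAlg d n u,
      (∀ i : ℕ, 1 ≤ i → i ≤ n - 1 →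
        φ (RingQuot.mkAlgHom ℂ (FTLRel d n u) (yg d n u i)) =
          (u + 1) • lA d n u i - 1) ∧
      (∀ j : ℕ, 1 ≤ j → j ≤ n →
        φ (RingQuot.mkAlgHom ℂ (FTLRel d n u) (yt d n u j)) = tA d n u j) := by
  have hu1 : u + 1 ≠ 0 := fun h => hu' (eq_neg_of_add_eq_zero_left h)
  refine ⟨AlgEquiv.ofAlgHom (Phi d n u hd hu1) (Psi d n u hd hu1)
    (phi_psi d n u hd hu1) (psi_phi d n u hd hu1), ?_, ?_⟩
  · intro i h1 h2
    show Phi d n u hd hu1 (RingQuot.mkAlgHom ℂ (FTLRel d n u) (yg d n u i)) = _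
    rw [Phi_mk, phiY_yg d n u hu1 h1 h2]
  · intro j h1 h2
    show Phi d n u hd hu1 (RingQuot.mkAlgHom ℂ (FTLRel d n u) (yt d n u j)) = _
    rw [Phi_mk, phiY_yt d n u hu1 h1 h2]
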